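/- Let k > 0 be even and let S ⊆ [2n−1] with |S| = k, k < n. If C is a connected component of O_n(S) that is regular, then C is d-regular with d = n − k/2. Moreover for odd k > 0, O_n(S) has no regular component. -/

import Mathlib

open Finset

/-- The Kneser graph: vertices are the `k`-element subsets of `[n]`,
adjacent iff disjoint. -/
def kneser (n k : ℕ) : SimpleGraph {s : Finset (Fin n) // s.card = k} where
  Adj u v := u ≠ v ∧ Disjoint (u : Finset (Fin n)) (v : Finset (Fin n))
  symm := by
    constructor
    intro u v h
    exact ⟨Ne.symm h.1, h.2.symm⟩
  loopless := by
    constructor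
    intro u h
    exact h.1 rfl

instance kneserDec (n k : ℕ) : DecidableRel (kneser n k).Adj :=
  fun u v => inferInstanceAs (Decidable (u ≠ v ∧ Disjoint (u : Finset (Fin n)) (v : Finset (Fin n))))

/-- The bipartite Kneser graph: vertices are the `k` and `(n-k)`-element subsets of `[n]`,
adjacent iff one is a proper subset of the other. -/
def bipKneser (n k : ℕ) : SimpleGraph {s : Finset (Fin n) // s.card = k ∨ s.card = n - k} where
  Adj u v := (u : Finset (Fin n)) ⊂ (v : Finset (Fin n)) ∨ (v : Finset (Fin n)) ⊂ (u : Finset (Fin n))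
  symm := by
    constructor
    intro u v h
    exact h.symm
  loopless := by
    constructor
    intro u h
    cases h with
    | inl h => exact ssubset_irrefl _ h
    | inr h => exact ssubset_irrefl _ h

instance bipKneserDec (n k : ℕ) : DecidableRel (bipKneser n k).Adj :=
  fun u v => inferInstanceAs (Decidable (_ ∨ _))

/-- The middle levels graph `B_n` is the bipartite Kneser graph `B_{2n-1, n-1}`. -/
def middleLevels (n : ℕ) := bipKneser (2 * n - 1) (n - 1)

/-- The odd graph `O_n` is the Kneser graph `K_{2n-1, n-1}`. -/
def oddGraph (n : ℕ) := kneser (2 * n - 1) (n - 1)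

instance oddGraphDec (n : ℕ) : DecidableRel (oddGraph n).Adj := kneserDec _ _

/-- `O_n(S)`: the odd graph with every edge whose label lies in `S` deleted.  The label of an
edge `(u,v)` is the unique element of `[2n−1] − (u ∪ v)`, so an edge survives iff the
complement of `u ∪ v` is disjoint from `S`. -/
def oddGraphDel (n : ℕ) (S : Finset (Fin (2 * n - 1))) :
    SimpleGraph {s : Finset (Fin (2 * n - 1)) // s.card = n - 1} where
  Adj u v := (oddGraph n).Adj u v ∧
    Disjoint ((u : Finset (Fin (2 * n - 1))) ∪ (v : Finset (Fin (2 * n - 1))))ᶜ S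
  symm := by
    constructor
    intro u v h
    beta_reduce at h ⊢
    refine ⟨h.1.symm, ?_⟩
    rw [Finset.union_comm]
    exact h.2
  loopless := by
    constructor
    intro u h
    exact (oddGraph n).loopless.irrefl u h.1

instance oddGraphDelDec (n : ℕ) (S : Finset (Fin (2 * n - 1))) :
    DecidableRel (oddGraphDel n S).Adj :=
  fun u v => inferInstanceAs (Decidable ((oddGraph n).Adj u v ∧ _))

lemma oddDegree_formula (n : ℕ) (hn : 2 ≤ n) (S : Finset (Fin (2 * n - 1)))
    (u : {s : Finset (Fin (2 * n - 1)) // s.card = n - 1}) :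
    (oddGraphDel n S).degree u = (((u : Finset (Fin (2 * n - 1)))ᶜ) \ S).card := by
  classical
  rw [← SimpleGraph.card_neighborFinset_eq_degree]
  symm
  have hucard : ((u : Finset (Fin (2 * n - 1)))ᶜ).card = n := by
    rw [Finset.card_compl, u.2, Fintype.card_fin]; omega
  refine Finset.card_bij (fun x hx => (⟨((u : Finset (Fin (2 * n - 1)))ᶜ).erase x, ?_⟩ :
      {s : Finset (Fin (2 * n - 1)) // s.card = n - 1})) ?_ ?_ ?_
  · simp only [Finset.mem_sdiff, Finset.mem_compl] at hx
    rw [Finset.card_erase_of_mem (by simp [hx.1]), hucard]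
  · intro x hx
    simp only [Finset.mem_sdiff, Finset.mem_compl] at hx
    rw [SimpleGraph.mem_neighborFinset]
    have hxu : x ∈ (u : Finset (Fin (2 * n - 1)))ᶜ := Finset.mem_compl.2 hx.1
    have hdisj : Disjoint (u : Finset (Fin (2 * n - 1)))
        (((u : Finset (Fin (2 * n - 1)))ᶜ).erase x) :=
      Finset.disjoint_left.2 fun a ha hb =>
        (Finset.mem_compl.1 (Finset.mem_of_mem_erase hb)) ha
    refine ⟨⟨?_, hdisj⟩, ?_⟩
    · intro h
      have h' : (u : Finset (Fin (2 * n - 1))) = ((u : Finset (Fin (2 * n - 1)))ᶜ).erase x :=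
        congrArg Subtype.val h
      have hne : (u : Finset (Fin (2 * n - 1))).Nonempty := by
        rw [← Finset.card_pos, u.2]; omega
      obtain ⟨y, hy⟩ := hne
      have hy2 : y ∈ ((u : Finset (Fin (2 * n - 1)))ᶜ).erase x := h' ▸ hy
      exact Finset.mem_compl.1 (Finset.mem_of_mem_erase hy2) hy
    · have hT : ((u : Finset (Fin (2 * n - 1))) ∪
          ((u : Finset (Fin (2 * n - 1)))ᶜ).erase x)ᶜ = {x} := by
        apply Finset.eq_singleton_iff_unique_mem.2
        constructor
        · simp only [Finset.mem_compl, Finset.mem_union, Finset.mem_erase, not_or, not_and_or,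
            not_not]
          exact ⟨hx.1, Or.inl trivial⟩
        · intro y hy
          simp only [Finset.mem_compl, Finset.mem_union, Finset.mem_erase, not_or, not_and_or,
            not_not] at hy
          rcases hy.2 with h | h
          · exact h
          · exact absurd h hy.1
      rw [hT]
      exact Finset.disjoint_singleton_left.2 hx.2
  · intro x hx y hy h
    simp only [Finset.mem_sdiff, Finset.mem_compl] at hx hy
    have h' : ((u : Finset (Fin (2 * n - 1)))ᶜ).erase x =
        ((u : Finset (Fin (2 * n - 1)))ᶜ).erase y := congrArg Subtype.val h
    by_contra hxy
    have hmem : x ∈ ((u : Finset (Fin (2 * n - 1)))ᶜ).erase y :=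
      Finset.mem_erase.2 ⟨hxy, Finset.mem_compl.2 hx.1⟩
    rw [← h'] at hmem
    exact (Finset.mem_erase.1 hmem).1 rfl
  · intro v hv
    rw [SimpleGraph.mem_neighborFinset] at hv
    obtain ⟨⟨hne, hdisj⟩, hS⟩ := hv
    have hcardT : (((u : Finset (Fin (2 * n - 1))) ∪ (v : Finset (Fin (2 * n - 1))))ᶜ).card = 1 := by
      rw [Finset.card_compl, Finset.card_union_of_disjoint hdisj, u.2, v.2, Fintype.card_fin]
      omega
    obtain ⟨x, hxT⟩ := Finset.card_eq_one.1 hcardT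
    have hxmem : x ∈ ((u : Finset (Fin (2 * n - 1))) ∪ (v : Finset (Fin (2 * n - 1))))ᶜ := by
      rw [hxT]; exact Finset.mem_singleton_self x
    simp only [Finset.mem_compl, Finset.mem_union, not_or] at hxmem
    have hxS : x ∉ S := by
      rw [hxT] at hS
      exact Finset.disjoint_singleton_left.1 hS
    refine ⟨x, Finset.mem_sdiff.2 ⟨Finset.mem_compl.2 hxmem.1, hxS⟩, ?_⟩
    apply Subtype.ext
    have hsub : (v : Finset (Fin (2 * n - 1))) ⊆ ((u : Finset (Fin (2 * n - 1)))ᶜ).erase x := by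
      intro y hy
      refine Finset.mem_erase.2 ⟨?_, Finset.mem_compl.2 ?_⟩
      · rintro rfl; exact hxmem.2 hy
      · exact fun hc => Finset.disjoint_left.1 hdisj hc hy
    have hcards : (((u : Finset (Fin (2 * n - 1)))ᶜ).erase x).card ≤
        (v : Finset (Fin (2 * n - 1))).card := by
      rw [Finset.card_erase_of_mem (Finset.mem_compl.2 hxmem.1), hucard, v.2]
    show ((u : Finset (Fin (2 * n - 1)))ᶜ).erase x = (v : Finset (Fin (2 * n - 1)))
    exact (Finset.eq_of_subset_of_card_le hsub hcards).symm

lemma oddDegree_sum (n k : ℕ) (hk : 0 < k) (hkn : k < n)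
    (S : Finset (Fin (2 * n - 1))) (hS : S.card = k)
    (u v : {s : Finset (Fin (2 * n - 1)) // s.card = n - 1})
    (h : (oddGraphDel n S).Adj u v) :
    (oddGraphDel n S).degree u + (oddGraphDel n S).degree v = 2 * n - k := by
  have hn : 2 ≤ n := by omega
  obtain ⟨⟨hne, hdisj⟩, hScond⟩ := h
  rw [oddDegree_formula n hn S u, oddDegree_formula n hn S v]
  have hu : ((u : Finset (Fin (2 * n - 1)))ᶜ \ S).card +
      ((u : Finset (Fin (2 * n - 1)))ᶜ ∩ S).card = n := by
    rw [Finset.card_sdiff_add_card_inter, Finset.card_compl, u.2, Fintype.card_fin]; omega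
  have hv : ((v : Finset (Fin (2 * n - 1)))ᶜ \ S).card +
      ((v : Finset (Fin (2 * n - 1)))ᶜ ∩ S).card = n := by
    rw [Finset.card_sdiff_add_card_inter, Finset.card_compl, v.2, Fintype.card_fin]; omega
  have hdisj2 : Disjoint ((u : Finset (Fin (2 * n - 1)))ᶜ ∩ S)
      ((v : Finset (Fin (2 * n - 1)))ᶜ ∩ S) := by
    rw [Finset.disjoint_left]
    intro a ha hb
    simp only [Finset.mem_inter, Finset.mem_compl] at ha hb
    have haT : a ∈ ((u : Finset (Fin (2 * n - 1))) ∪ (v : Finset (Fin (2 * n - 1))))ᶜ := by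
      simp [ha.1, hb.1]
    exact Finset.disjoint_left.1 hScond haT ha.2
  have hunion : ((u : Finset (Fin (2 * n - 1)))ᶜ ∩ S) ∪
      ((v : Finset (Fin (2 * n - 1)))ᶜ ∩ S) = S := by
    ext a
    simp only [Finset.mem_union, Finset.mem_inter, Finset.mem_compl]
    constructor
    · rintro (⟨_, h⟩ | ⟨_, h⟩) <;> exact h
    · intro ha
      by_cases hau : a ∈ (u : Finset (Fin (2 * n - 1)))
      · exact Or.inr ⟨fun hav => Finset.disjoint_left.1 hdisj hau hav, ha⟩
      · exact Or.inl ⟨hau, ha⟩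
  have hsum : ((u : Finset (Fin (2 * n - 1)))ᶜ ∩ S).card +
      ((v : Finset (Fin (2 * n - 1)))ᶜ ∩ S).card = k := by
    rw [← Finset.card_union_of_disjoint hdisj2, hunion, hS]
  omega

lemma oddDegree_pos (n k : ℕ) (hk : 0 < k) (hkn : k < n)
    (S : Finset (Fin (2 * n - 1))) (hS : S.card = k)
    (u : {s : Finset (Fin (2 * n - 1)) // s.card = n - 1}) :
    0 < (oddGraphDel n S).degree u := by
  have hn : 2 ≤ n := by omega
  rw [oddDegree_formula n hn S u]
  have h1 : ((u : Finset (Fin (2 * n - 1)))ᶜ \ S).card +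
      ((u : Finset (Fin (2 * n - 1)))ᶜ ∩ S).card = n := by
    rw [Finset.card_sdiff_add_card_inter, Finset.card_compl, u.2, Fintype.card_fin]; omega
  have h2 : ((u : Finset (Fin (2 * n - 1)))ᶜ ∩ S).card ≤ k := by
    rw [← hS]; exact Finset.card_le_card Finset.inter_subset_right
  omega


/-- Let `S ⊆ [2n−1]` with `|S| = k`, `0 < k < n`.  If `k` is even, then any
regular connected component of `O_n(S)` is `(n − k/2)`-regular; and if `k` is odd, then
`O_n(S)` has no regular component. -/
theorem regular_components_degree (n k : ℕ) (hk : 0 < k) (hkn : k < n)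
    (S : Finset (Fin (2 * n - 1))) (hS : S.card = k) :
    (Even k →
      ∀ (C : (oddGraphDel n S).ConnectedComponent) (d : ℕ),
        (∀ v ∈ C.supp, (oddGraphDel n S).degree v = d) → d = n - k / 2) ∧
    (Odd k →
      ¬ ∃ (C : (oddGraphDel n S).ConnectedComponent) (d : ℕ),
          ∀ v ∈ C.supp, (oddGraphDel n S).degree v = d) := by
  classical
  have key : ∀ (C : (oddGraphDel n S).ConnectedComponent) (d : ℕ),
      (∀ v ∈ C.supp, (oddGraphDel n S).degree v = d) → d + d = 2 * n - k := by
    intro C d hreg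
    obtain ⟨w, hw⟩ := C.exists_rep
    have hwC : w ∈ C.supp := by
      rw [SimpleGraph.ConnectedComponent.mem_supp_iff]; exact hw
    have hdw := hreg w hwC
    have hpos : 0 < (oddGraphDel n S).degree w := oddDegree_pos n k hk hkn S hS w
    obtain ⟨v, hadj⟩ := ((oddGraphDel n S).degree_pos_iff_exists_adj w).1 hpos
    have hvC : v ∈ C.supp := by
      rw [SimpleGraph.ConnectedComponent.mem_supp_iff, ← hw]
      exact SimpleGraph.ConnectedComponent.sound hadj.symm.reachable
    have hdv := hreg v hvC
    have hsum := oddDegree_sum n k hk hkn S hS w v hadj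
    omega
  constructor
  · intro hkeven C d hreg
    have := key C d hreg
    obtain ⟨m, hm⟩ := hkeven
    omega
  · intro hkodd ⟨C, d, hreg⟩
    have := key C d hreg
    obtain ⟨m, hm⟩ := hkodd
    omega
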